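/- Let P be holomorphic on H = {Z ∈ ℂ : Re Z < c} with |P(Z) - δZ| < ε̃ on H, where δ ≥ 2. Then P is injective on H' = {Z : Re Z < c - 2ε̃/δ}. -/

import Mathlib

open Metric

/-- if P is holomorphic on H = {Re Z < c} with |P(Z) - δZ| < ε̃ on H,
where δ ≥ 2, then P is injective on H' = {Re Z < c - 2ε̃/δ}. -/
theorem stmt13
    (δ : ℕ) (hδ : 2 ≤ δ) (ε c : ℝ) (hε : 0 < ε)
    (P : ℂ → ℂ)
    (hP : DifferentiableOn ℂ P {Z : ℂ | Z.re < c})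
    (hclose : ∀ Z : ℂ, Z.re < c → ‖P Z - (δ : ℂ) * Z‖ < ε) :
    Set.InjOn P {Z : ℂ | Z.re < c - 2 * ε / δ} := by
  have hδ0 : (0 : ℝ) < δ := by positivity
  set g : ℂ → ℂ := fun z => P z - (δ : ℂ) * z with hg
  have hopen : IsOpen {Z : ℂ | Z.re < c} := isOpen_lt Complex.continuous_re continuous_const
  have hgdiff : ∀ z ∈ {Z : ℂ | Z.re < c}, DifferentiableAt ℂ g z := by
    intro z hz
    exact ((hP.differentiableAt (hopen.mem_nhds hz))).sub
      ((differentiableAt_id.const_mul _))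
  set R : ℝ := 2 * ε / δ with hR
  have hR0 : 0 < R := by positivity
  -- Cauchy estimate: on H', ‖deriv g‖ ≤ ε / R = δ / 2
  have hderiv : ∀ z : ℂ, z.re < c - R → ‖deriv g z‖ ≤ (δ : ℝ) / 2 := by
    intro z hz
    have hball : closedBall z R ⊆ {Z : ℂ | Z.re < c} := by
      intro w hw
      have : ‖w - z‖ ≤ R := by simpa [dist_eq_norm] using hw
      have hre : w.re - z.re ≤ R := by
        calc w.re - z.re = (w - z).re := by simp
        _ ≤ ‖w - z‖ := Complex.re_le_norm _
        _ ≤ R := this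
      simpa using lt_of_le_of_lt (by linarith : w.re ≤ z.re + R) (by linarith)
    have hd : DiffContOnCl ℂ g (ball z R) := by
      apply DifferentiableOn.diffContOnCl
      intro w hw
      rw [closure_ball z hR0.ne'] at hw
      exact (hgdiff w (hball hw)).differentiableWithinAt
    have := Complex.norm_deriv_le_of_forall_mem_sphere_norm_le hR0 hd (C := ε) ?_
    · calc ‖deriv g z‖ ≤ ε / R := this
        _ = (δ : ℝ) / 2 := by rw [hR]; field_simp
    · intro w hw
      have hwball : w ∈ closedBall z R := sphere_subset_closedBall hw
      exact (hclose w (hball hwball)).le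
  -- Mean value inequality on the convex halfplane
  have hconv : Convex ℝ {Z : ℂ | Z.re < c - R} := convex_halfSpace_re_lt _
  intro z₁ hz₁ z₂ hz₂ hPz
  simp only [Set.mem_setOf_eq] at hz₁ hz₂
  have hlip : ‖g z₂ - g z₁‖ ≤ (δ : ℝ) / 2 * ‖z₂ - z₁‖ :=
    hconv.norm_image_sub_le_of_norm_deriv_le
      (fun x hx => hgdiff x (show x.re < c by
        have hx' : x.re < c - R := hx; linarith))
      (fun x hx => hderiv x hx) hz₁ hz₂
  have hkey : (δ : ℝ) * ‖z₂ - z₁‖ ≤ (δ : ℝ) / 2 * ‖z₂ - z₁‖ := by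
    calc (δ : ℝ) * ‖z₂ - z₁‖ = ‖(δ : ℂ) * (z₂ - z₁)‖ := by
          simp [norm_mul]
      _ = ‖(δ : ℂ) * (z₁ - z₂)‖ := by rw [← norm_neg]; congr 1; ring
      _ = ‖g z₂ - g z₁‖ := by rw [hg]; congr 1; simp only; rw [hPz]; ring
      _ ≤ _ := hlip
  have h0 : ‖z₂ - z₁‖ = 0 := by nlinarith [norm_nonneg (z₂ - z₁)]
  exact (sub_eq_zero.mp (norm_eq_zero.mp h0)).symm
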